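/- arXiv:1310.7648 — 3 statements merged into one kernel-verified Lean document; each statement's English description precedes it below -/
import Mathlib

section
/- For β, γ > 0, ∫₀^∞ exp(−β/(4x) − γx) dx = √(β/γ) · K₁(√(βγ)), where K₁ is the modified Bessel function of the second kind of order 1. -/
open MeasureTheory Set

/-- The modified Bessel function of the second kind of order 1, via its standard
integral representation K₁(x) = ∫₀^∞ e^{−x cosh t} cosh t dt. -/
noncomputable def besselK1 (x : ℝ) : ℝ :=
  ∫ t in Ioi (0:ℝ), Real.exp (-x * Real.cosh t) * Real.cosh t

lemma cosh_lb (t : ℝ) : 1 + t ^ 2 / 8 ≤ Real.cosh t := by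
  rw [← Real.cosh_abs, Real.cosh_eq]
  set s := |t| with hs
  have hs0 : 0 ≤ s := abs_nonneg t
  have hst : s ^ 2 = t ^ 2 := sq_abs t
  have h1 : 1 + s / 2 ≤ Real.exp (s / 2) := by
    have := Real.add_one_le_exp (s / 2); linarith
  have h2 : Real.exp s = Real.exp (s / 2) ^ 2 := by
    rw [sq, ← Real.exp_add]; ring_nf
  have h4 : (1 + s / 2) ^ 2 ≤ Real.exp (s / 2) ^ 2 :=
    pow_le_pow_left₀ (by linarith) h1 2
  have h3 : 1 - s ≤ Real.exp (-s) := by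
    have := Real.add_one_le_exp (-s); linarith
  nlinarith

lemma integrable_exp_sub_cosh {a : ℝ} (ha : 0 < a) :
    Integrable (fun t : ℝ => Real.exp (-a * Real.cosh t) * Real.exp t) := by
  have hgauss : Integrable (fun t : ℝ => Real.exp (-(a / 8) * (t - 4 / a) ^ 2)) :=
    (integrable_exp_neg_mul_sq (by positivity : (0:ℝ) < a / 8)).comp_sub_right (4 / a)
  have hdom : Integrable (fun t : ℝ => Real.exp (2 / a - a) * Real.exp (-(a / 8) * (t - 4 / a) ^ 2)) :=
    hgauss.const_mul _
  refine hdom.mono' ?_ ?_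
  · exact (Real.continuous_exp.comp (continuous_const.mul Real.continuous_cosh)).mul
      Real.continuous_exp |>.aestronglyMeasurable
  · filter_upwards with t
    rw [Real.norm_eq_abs, abs_of_pos (by positivity), ← Real.exp_add, ← Real.exp_add]
    apply Real.exp_le_exp.2
    have h := cosh_lb t
    have h2 : a * (1 + t ^ 2 / 8) ≤ a * Real.cosh t :=
      mul_le_mul_of_nonneg_left h ha.le
    have : 2 / a - a + -(a / 8) * (t - 4 / a) ^ 2 = t - a * (1 + t ^ 2 / 8) := by
      field_simp; ring
    rw [this]
    linarith

/-- ∫₀^∞ exp(−β/(4x) − γx) dx = √(β/γ)·K₁(√(βγ)) for β, γ > 0. -/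
theorem integral_exp_inv_add_linear_eq_besselK1 (β γ : ℝ) (hβ : 0 < β) (hγ : 0 < γ) :
    ∫ x in Ioi (0:ℝ), Real.exp (-β / (4 * x) - γ * x) =
      Real.sqrt (β / γ) * besselK1 (Real.sqrt (β * γ)) := by
  set a : ℝ := Real.sqrt (β * γ) with ha_def
  set sb : ℝ := Real.sqrt β with hsb_def
  set sg : ℝ := Real.sqrt γ with hsg_def
  have hsb : 0 < sb := Real.sqrt_pos.2 hβ
  have hsg : 0 < sg := Real.sqrt_pos.2 hγ
  have hsb2 : sb ^ 2 = β := Real.sq_sqrt hβ.le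
  have hsg2 : sg ^ 2 = γ := Real.sq_sqrt hγ.le
  have haeq : a = sb * sg := by rw [ha_def, Real.sqrt_mul hβ.le, hsb_def, hsg_def]
  have ha : 0 < a := by rw [haeq]; positivity
  have hdiv : Real.sqrt (β / γ) = sb / sg := by
    rw [Real.sqrt_div hβ.le, hsb_def, hsg_def]
  set c : ℝ := sb / (2 * sg) with hc_def
  have hc : 0 < c := by positivity
  -- integrability
  have hG : Integrable (fun t : ℝ => Real.exp (-a * Real.cosh t) * Real.exp t) :=
    integrable_exp_sub_cosh ha
  have hG2 : Integrable (fun t : ℝ => Real.exp (-a * Real.cosh t) * Real.exp (-t)) := by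
    have := hG.comp_neg
    refine this.congr ?_
    filter_upwards with t
    simp [Real.cosh_neg]
  -- change of variables x = c * exp t
  have himg : (fun t : ℝ => c * Real.exp t) '' Set.univ = Ioi (0:ℝ) := by
    rw [Set.image_univ]
    ext x
    simp only [Set.mem_range, Set.mem_Ioi]
    constructor
    · rintro ⟨t, rfl⟩; positivity
    · intro hx
      exact ⟨Real.log (x / c), by rw [Real.exp_log (by positivity)]; field_simp⟩
  have key := integral_image_eq_integral_abs_deriv_smul (f := fun t : ℝ => c * Real.exp t)
    (f' := fun t : ℝ => c * Real.exp t) MeasurableSet.univ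
    (fun x _ => ((Real.hasDerivAt_exp x).const_mul c).hasDerivWithinAt)
    (fun x _ y _ h => Real.exp_injective (mul_left_cancel₀ hc.ne' h))
    (fun x => Real.exp (-β / (4 * x) - γ * x))
  rw [himg, Measure.restrict_univ] at key
  rw [key]
  have hpt : ∀ t : ℝ, |c * Real.exp t| • Real.exp (-β / (4 * (c * Real.exp t)) - γ * (c * Real.exp t))
      = c * (Real.exp (-a * Real.cosh t) * Real.exp t) := by
    intro t
    have hE : 0 < Real.exp t := Real.exp_pos t
    rw [abs_of_pos (by positivity), smul_eq_mul]
    have harg : -β / (4 * (c * Real.exp t)) - γ * (c * Real.exp t) = -a * Real.cosh t := by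
      rw [Real.cosh_eq, hc_def, haeq, ← hsb2, ← hsg2, Real.exp_neg]
      field_simp
      ring
    rw [harg]; ring
  simp_rw [hpt]
  rw [integral_const_mul]
  -- split the real line integral
  have hsplit : (∫ t : ℝ, Real.exp (-a * Real.cosh t) * Real.exp t)
      = ∫ t in Ioi (0:ℝ), (Real.exp (-a * Real.cosh t) * Real.exp (-t)
          + Real.exp (-a * Real.cosh t) * Real.exp t) := by
    have hIic : (∫ t in Iic (0:ℝ), Real.exp (-a * Real.cosh t) * Real.exp t)
        = ∫ t in Ioi (0:ℝ), Real.exp (-a * Real.cosh t) * Real.exp (-t) := by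
      have h0 := integral_comp_neg_Ioi (0:ℝ)
        (fun t => Real.exp (-a * Real.cosh t) * Real.exp t)
      rw [neg_zero] at h0
      rw [← h0]
      refine setIntegral_congr_fun measurableSet_Ioi fun t _ => ?_
      rw [Real.cosh_neg]
    rw [← intervalIntegral.integral_Iic_add_Ioi hG.integrableOn hG.integrableOn,
      integral_add hG2.integrableOn hG.integrableOn, hIic]
  rw [hsplit]
  have hcosh : ∀ t : ℝ, Real.exp (-a * Real.cosh t) * Real.exp (-t)
      + Real.exp (-a * Real.cosh t) * Real.exp t
      = 2 * (Real.exp (-a * Real.cosh t) * Real.cosh t) := by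
    intro t
    rw [Real.cosh_eq]
    ring
  simp_rw [hcosh]
  rw [integral_const_mul]
  rw [besselK1, hdiv, hc_def]
  ring
end

section
/- In discrete time EH with AF relaying, the fraction of blocks that are IT blocks equals 1/(E{X}+1) = 1/(1 + Pᵣd₁ᵐ/(2ηPₛ)), and the throughput equals τ = e^{−(a+d)/c}·u·K₁(u) / (2(1 + Pᵣd₁ᵐ/(2ηPₛ))), where a = Pₛd₂ᵐσ²_{n_d}γ₀, c = PₛPᵣ, d = Pᵣd₁ᵐσ²_{n_r}γ₀, b = d₁ᵐd₂ᵐσ²_{n_r}σ²_{n_d}γ₀, u = √(4(ad+bc)/c²). -/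
open MeasureTheory Set

lemma my_integrable_exp_neg_mul_abs {b : ℝ} (hb : 0 < b) :
    Integrable (fun x : ℝ => Real.exp (-(b * |x|))) := by
  have h1 : IntegrableOn (fun x : ℝ => Real.exp (-(b * |x|))) (Ioi 0) := by
    apply (exp_neg_integrableOn_Ioi 0 hb).congr_fun ?_ measurableSet_Ioi
    intro x hx; dsimp only; rw [abs_of_pos hx, neg_mul]
  have h2 : IntegrableOn (fun x : ℝ => Real.exp (-(b * |x|))) (Iic 0) := by
    rw [← Measure.map_neg_eq_self (volume : Measure ℝ)]
    have m : MeasurableEmbedding fun x : ℝ => -x :=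
      (Homeomorph.neg ℝ).measurableEmbedding
    rw [m.integrableOn_map_iff]
    simp only [Function.comp_def, abs_neg, neg_preimage, neg_Iic, neg_zero]
    exact Iff.mpr integrableOn_Ici_iff_integrableOn_Ioi h1
  rw [← integrableOn_univ, ← Iic_union_Ioi (a := (0:ℝ))]
  exact h2.union h1

lemma my_abs_le_cosh (x : ℝ) : |x| ≤ Real.cosh x := by
  have h1 : |x| ≤ Real.sinh |x| := Real.self_le_sinh_iff.mpr (abs_nonneg x)
  have h2 : Real.sinh |x| ≤ Real.cosh |x| := by
    have := Real.cosh_sub_sinh |x|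
    nlinarith [Real.exp_pos (-|x|)]
  calc |x| ≤ Real.sinh |x| := h1
    _ ≤ Real.cosh |x| := h2
    _ = Real.cosh x := Real.cosh_abs x

lemma my_bound {u : ℝ} (hu : 0 < u) (x : ℝ) :
    Real.cosh x * Real.exp (-(u * Real.cosh x)) ≤ (2/u) * Real.exp (-(u/2 * |x|)) := by
  have hc : (0:ℝ) < Real.cosh x := Real.cosh_pos x
  have key : Real.cosh x * Real.exp (-(u/2 * Real.cosh x)) ≤ 2/u := by
    have h := Real.add_one_le_exp (u/2 * Real.cosh x)
    have he : Real.exp (-(u/2 * Real.cosh x)) = (Real.exp (u/2 * Real.cosh x))⁻¹ := by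
      rw [Real.exp_neg]
    rw [he]
    rw [mul_inv_le_iff₀ (Real.exp_pos _)]
    have : 2/u * Real.exp (u/2 * Real.cosh x) ≥ 2/u * (u/2 * Real.cosh x) := by
      apply mul_le_mul_of_nonneg_left (by linarith) (by positivity)
    have : 2/u * (u/2 * Real.cosh x) = Real.cosh x := by field_simp
    nlinarith [mul_le_mul_of_nonneg_left (Real.add_one_le_exp (u/2 * Real.cosh x)) (le_of_lt (by positivity : (0:ℝ) < 2/u))]
  have h2 : Real.exp (-(u/2 * Real.cosh x)) ≤ Real.exp (-(u/2 * |x|)) := by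
    apply Real.exp_le_exp.mpr
    have := my_abs_le_cosh x
    nlinarith
  calc Real.cosh x * Real.exp (-(u * Real.cosh x))
      = (Real.cosh x * Real.exp (-(u/2 * Real.cosh x))) * Real.exp (-(u/2 * Real.cosh x)) := by
        rw [mul_assoc, ← Real.exp_add]; ring_nf
    _ ≤ (2/u) * Real.exp (-(u/2 * Real.cosh x)) := by
        apply mul_le_mul_of_nonneg_right key (Real.exp_pos _).le
    _ ≤ (2/u) * Real.exp (-(u/2 * |x|)) := by
        apply mul_le_mul_of_nonneg_left h2 (by positivity)

lemma my_integrable_cosh {u : ℝ} (hu : 0 < u) :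
    Integrable (fun x : ℝ => Real.cosh x * Real.exp (-(u * Real.cosh x))) := by
  apply Integrable.mono ((my_integrable_exp_neg_mul_abs (b := u/2) (by positivity)).const_mul (2/u))
  · exact (Real.continuous_cosh.mul ((continuous_const.mul Real.continuous_cosh).neg.rexp)).aestronglyMeasurable
  · filter_upwards with x
    have hc : (0:ℝ) < Real.cosh x := Real.cosh_pos x
    rw [Real.norm_eq_abs, Real.norm_eq_abs, abs_of_nonneg (by positivity), abs_of_nonneg (by positivity)]
    exact my_bound hu x

lemma my_integrable_sinh {u : ℝ} (hu : 0 < u) :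
    Integrable (fun x : ℝ => Real.sinh x * Real.exp (-(u * Real.cosh x))) := by
  apply Integrable.mono (my_integrable_cosh hu)
  · exact (Real.continuous_sinh.mul ((continuous_const.mul Real.continuous_cosh).neg.rexp)).aestronglyMeasurable
  · filter_upwards with x
    have hc : (0:ℝ) < Real.cosh x := Real.cosh_pos x
    rw [Real.norm_eq_abs, Real.norm_eq_abs, abs_mul, abs_mul,
      abs_of_nonneg (Real.exp_pos _).le, abs_of_nonneg hc.le]
    apply mul_le_mul_of_nonneg_right _ (Real.exp_pos _).le
    rw [Real.abs_sinh]
    have := Real.cosh_sub_sinh |x|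
    have := Real.cosh_abs x
    nlinarith [Real.exp_pos (-|x|)]

lemma my_key {u : ℝ} (hu : 0 < u) :
    ∫ t in Ioi (0:ℝ), Real.exp (-(t + (u/2)^2 / t)) = u * besselK1 u := by
  have hh : (0:ℝ) < u/2 := by positivity
  set f : ℝ → ℝ := fun x => u/2 * Real.exp x with hf
  have himg : f '' univ = Ioi 0 := by
    ext t
    simp only [image_univ, mem_range, mem_Ioi, hf]
    constructor
    · rintro ⟨x, rfl⟩; positivity
    · intro ht
      refine ⟨Real.log (t / (u/2)), ?_⟩
      rw [Real.exp_log (by positivity)]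
      field_simp
  have hderiv : ∀ x ∈ (univ : Set ℝ), HasDerivWithinAt f (u/2 * Real.exp x) univ x :=
    fun x _ => ((Real.hasDerivAt_exp x).const_mul (u/2)).hasDerivWithinAt
  have hinj : InjOn f univ := by
    intro x _ y _ h
    simpa [hf, Real.exp_eq_exp] using mul_left_cancel₀ (ne_of_gt hh) h
  have hcv := integral_image_eq_integral_abs_deriv_smul MeasurableSet.univ hderiv hinj
      (fun t => Real.exp (-(t + (u/2)^2 / t)))
  rw [himg] at hcv
  rw [hcv, Measure.restrict_univ]
  have hpt : ∀ x : ℝ, |u/2 * Real.exp x| • Real.exp (-(f x + (u/2)^2 / f x))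
      = u/2 * (Real.cosh x * Real.exp (-(u * Real.cosh x))
              + Real.sinh x * Real.exp (-(u * Real.cosh x))) := by
    intro x
    have hex : (0:ℝ) < Real.exp x := Real.exp_pos x
    have h1 : (u/2)^2 / f x = u/2 * Real.exp (-x) := by
      rw [hf]; simp only
      rw [Real.exp_neg]; field_simp
    have h2 : f x + (u/2)^2 / f x = u * Real.cosh x := by
      rw [h1, hf]; simp only
      rw [Real.cosh_eq]; ring
    rw [h2, smul_eq_mul, abs_of_pos (by positivity), ← Real.cosh_add_sinh x]
    ring
  simp_rw [hpt]
  rw [integral_const_mul, integral_add (my_integrable_cosh hu) (my_integrable_sinh hu)]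
  have hodd : ∫ x : ℝ, Real.sinh x * Real.exp (-(u * Real.cosh x)) = 0 := by
    set B : ℝ → ℝ := fun x => Real.sinh x * Real.exp (-(u * Real.cosh x)) with hB
    have hmp : MeasurePreserving (fun x : ℝ => -x) volume volume :=
      Measure.measurePreserving_neg _
    have hcomp : ∫ x : ℝ, B (-x) = ∫ x : ℝ, B x :=
      hmp.integral_comp (Homeomorph.neg ℝ).measurableEmbedding B
    have hBneg : ∀ x, B (-x) = -B x := by
      intro x; simp only [hB, Real.sinh_neg, Real.cosh_neg]; ring
    simp_rw [hBneg] at hcomp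
    rw [integral_neg] at hcomp
    linarith
  have heven : ∫ x : ℝ, Real.cosh x * Real.exp (-(u * Real.cosh x)) = 2 * besselK1 u := by
    have habs : ∀ x : ℝ, Real.cosh x * Real.exp (-(u * Real.cosh x))
        = (fun t => Real.cosh t * Real.exp (-(u * Real.cosh t))) |x| := by
      intro x; simp only [Real.cosh_abs]
    calc ∫ x : ℝ, Real.cosh x * Real.exp (-(u * Real.cosh x))
        = ∫ x : ℝ, (fun t => Real.cosh t * Real.exp (-(u * Real.cosh t))) |x| := by
          simp_rw [← habs]
      _ = 2 * ∫ t in Ioi (0:ℝ), Real.cosh t * Real.exp (-(u * Real.cosh t)) :=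
          integral_comp_abs (f := fun t => Real.cosh t * Real.exp (-(u * Real.cosh t)))
      _ = 2 * besselK1 u := by
          rw [besselK1]
          congr 1
          refine setIntegral_congr_fun measurableSet_Ioi fun t _ => ?_
          rw [neg_mul, mul_comm]
  rw [hodd, heven]; ring

/-- Theorem 2: throughput of discrete time EH in AF relaying. The IT-block
fraction equals 1/(E{X}+1) = 1/(1 + Pᵣd₁ᵐ/(2ηPₛ)), and the throughput
τ = (1/2)·E{1−I₀}·(IT-block fraction) equals e^{−(a+d)/c}·u·K₁(u)/(2(1+Pᵣd₁ᵐ/(2ηPₛ))). -/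
theorem throughput_discrete_AF
    (Ps Pr d1m d2m σr σd γ₀ η : ℝ)
    (hPs : 0 < Ps) (hPr : 0 < Pr) (hd1m : 0 < d1m) (hd2m : 0 < d2m)
    (hσr : 0 < σr) (hσd : 0 < σd) (hγ₀ : 0 < γ₀) (hη : 0 < η)
    (a b c d u EX : ℝ)
    (ha : a = Ps * d2m * σd * γ₀) (hb : b = d1m * d2m * σr * σd * γ₀)
    (hc : c = Ps * Pr) (hd : d = Pr * d1m * σr * γ₀)
    (hu : u = Real.sqrt (4 * (a * d + b * c) / c ^ 2))
    (hEX : EX = Pr * d1m / (2 * η * Ps)) :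
    1 / (EX + 1) = 1 / (1 + Pr * d1m / (2 * η * Ps)) ∧
    (1 / 2) *
      (∫ x in Ioi (0:ℝ), ∫ y in Ioi (0:ℝ),
        (if Ps * Pr * x * y /
              (Pr * y * d1m * σr + d2m * σd * (Ps * x + d1m * σr)) < γ₀
          then (0:ℝ) else 1) * Real.exp (-x) * Real.exp (-y)) *
      (1 / (EX + 1)) =
    Real.exp (-((a + d) / c)) * u * besselK1 u /
      (2 * (1 + Pr * d1m / (2 * η * Ps))) := by
  have hc0 : 0 < c := by rw [hc]; positivity
  have ha0 : 0 < a := by rw [ha]; positivity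
  have hb0 : 0 < b := by rw [hb]; positivity
  have hd0 : 0 < d := by rw [hd]; positivity
  have hu0 : 0 < u := by
    rw [hu]; exact Real.sqrt_pos.mpr (by positivity)
  have hsq : u ^ 2 = 4 * (a * d + b * c) / c ^ 2 := by
    rw [hu, Real.sq_sqrt (by positivity)]
  have hu2 : (u / 2) ^ 2 = (a * d + b * c) / c ^ 2 := by
    have h4 : (u / 2) ^ 2 = u ^ 2 / 4 := by ring
    rw [h4, hsq]; ring
  have hdc : 0 < d / c := by positivity
  have hJ : (∫ x in Ioi (0:ℝ), ∫ y in Ioi (0:ℝ),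
        (if Ps * Pr * x * y /
              (Pr * y * d1m * σr + d2m * σd * (Ps * x + d1m * σr)) < γ₀
          then (0:ℝ) else 1) * Real.exp (-x) * Real.exp (-y))
      = Real.exp (-((a + d) / c)) * (u * besselK1 u) := by
    have step1 : ∀ x ∈ Ioi (0:ℝ),
        (∫ y in Ioi (0:ℝ),
          (if Ps * Pr * x * y /
                (Pr * y * d1m * σr + d2m * σd * (Ps * x + d1m * σr)) < γ₀
            then (0:ℝ) else 1) * Real.exp (-x) * Real.exp (-y))
        = (Ioi (d/c)).indicator
            (fun x => Real.exp (-x) * Real.exp (-((a*x+b)/(c*x-d)))) x := by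
      intro x hx
      rw [mem_Ioi] at hx
      have hiff : ∀ y : ℝ, 0 < y →
          ((Ps * Pr * x * y /
              (Pr * y * d1m * σr + d2m * σd * (Ps * x + d1m * σr)) < γ₀)
            ↔ y * (c*x - d) < a*x + b) := by
        intro y hy
        have hDen : 0 < Pr * y * d1m * σr + d2m * σd * (Ps * x + d1m * σr) := by
          positivity
        rw [div_lt_iff₀ hDen]
        have hpoly : Ps * Pr * x * y
            - γ₀ * (Pr * y * d1m * σr + d2m * σd * (Ps * x + d1m * σr))
            = y * (c*x - d) - (a*x + b) := by
          rw [ha, hb, hc, hd]; ring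
        constructor <;> intro h <;> nlinarith [hpoly]
      by_cases hxc : c * x ≤ d
      · have hnot : x ∉ Ioi (d/c) := by
          rw [mem_Ioi, not_lt]
          exact (le_div_iff₀ hc0).mpr (by linarith)
        rw [indicator_of_notMem hnot]
        rw [setIntegral_congr_fun measurableSet_Ioi
          (g := fun _ => (0:ℝ)) ?_, integral_zero]
        intro y hy
        rw [mem_Ioi] at hy
        have hcond : Ps * Pr * x * y /
            (Pr * y * d1m * σr + d2m * σd * (Ps * x + d1m * σr)) < γ₀ := by
          rw [hiff y hy]
          nlinarith
        simp [hcond]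
      · push_neg at hxc
        have hcd : 0 < c*x - d := by linarith
        set y₀ : ℝ := (a*x+b)/(c*x-d) with hy₀def
        have hy₀ : 0 < y₀ := by positivity
        have hmem : x ∈ Ioi (d/c) := by
          rw [mem_Ioi, div_lt_iff₀ hc0]; linarith [hxc]
        rw [indicator_of_mem hmem]
        have hcg : ∀ y ∈ Ioi (0:ℝ),
            (if Ps * Pr * x * y /
                (Pr * y * d1m * σr + d2m * σd * (Ps * x + d1m * σr)) < γ₀
              then (0:ℝ) else 1) * Real.exp (-x) * Real.exp (-y)
            = Real.exp (-x) * (Ici y₀).indicator (fun y => Real.exp (-y)) y := by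
          intro y hy
          rw [mem_Ioi] at hy
          by_cases hcnd : y < y₀
          · have h1 : Ps * Pr * x * y /
                (Pr * y * d1m * σr + d2m * σd * (Ps * x + d1m * σr)) < γ₀ := by
              rw [hiff y hy, ← lt_div_iff₀ hcd]; exact hcnd
            have h2 : y ∉ Ici y₀ := by rw [mem_Ici]; linarith
            rw [indicator_of_notMem h2, if_pos h1]; ring
          · push_neg at hcnd
            have h1 : ¬ (Ps * Pr * x * y /
                (Pr * y * d1m * σr + d2m * σd * (Ps * x + d1m * σr)) < γ₀) := by
              rw [hiff y hy, ← lt_div_iff₀ hcd]; exact not_lt.mpr hcnd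
            rw [indicator_of_mem (mem_Ici.mpr hcnd), if_neg h1]; ring
        have hsub : Ici y₀ ⊆ Ioi (0:ℝ) := fun y hy => lt_of_lt_of_le hy₀ hy
        rw [setIntegral_congr_fun measurableSet_Ioi hcg, integral_const_mul,
          setIntegral_indicator measurableSet_Ici,
          inter_eq_self_of_subset_right hsub,
          integral_Ici_eq_integral_Ioi, integral_exp_neg_Ioi]
    rw [setIntegral_congr_fun measurableSet_Ioi step1,
      setIntegral_indicator measurableSet_Ioi,
      inter_eq_self_of_subset_right (Ioi_subset_Ioi hdc.le)]
    have htr := integral_image_eq_integral_abs_deriv_smul (s := Ioi (0:ℝ)) (f := fun t : ℝ => t + d/c)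
        (f' := fun _ => (1:ℝ)) measurableSet_Ioi
        (fun t _ => ((hasDerivAt_id t).add_const (d/c)).hasDerivWithinAt)
        ((add_left_injective (d/c)).injOn)
        (fun x => Real.exp (-x) * Real.exp (-((a*x+b)/(c*x-d))))
    rw [image_add_const_Ioi, zero_add] at htr
    rw [htr]
    have step4 : ∀ t ∈ Ioi (0:ℝ),
        |(1:ℝ)| • (Real.exp (-(t + d/c)) *
            Real.exp (-((a*(t + d/c)+b)/(c*(t + d/c)-d))))
        = Real.exp (-((a + d) / c)) * Real.exp (-(t + (u/2)^2 / t)) := by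
      intro t ht
      rw [mem_Ioi] at ht
      rw [abs_one, one_smul, ← Real.exp_add, ← Real.exp_add]
      congr 1
      rw [hu2]
      have hct : c*(t + d/c) - d = c * t := by field_simp; ring
      rw [hct]
      field_simp
      ring
    rw [setIntegral_congr_fun measurableSet_Ioi step4, integral_const_mul,
      my_key hu0]
  constructor
  · rw [hEX, add_comm]
  · rw [hJ, hEX]
    have hE : 0 < Pr * d1m / (2 * η * Ps) := by positivity
    have h1 : Pr * d1m / (2 * η * Ps) + 1 ≠ 0 := by positivity
    have h2 : 1 + Pr * d1m / (2 * η * Ps) ≠ 0 := by positivity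
    field_simp
    ring
end

section
/- For positive constants a, b, c, d, η, Pₛ, Pᵣ, d₁ᵐ, the throughput of Protocol 1 satisfies τ = (e^{−(a+d)/c}/2)·(u·K₁(u) − c·d₁ᵐPᵣ·ν), where u = √(4(ad+bc)/c²) and ν = ∫₀^∞ e^{−(x + (ad+bc)/(c²x))}/(2cηPₛx + 2ηPₛd + cd₁ᵐPᵣ) dx, given that τ = ∫_{d/c}^∞ (1 − α(z))/2 · e^{−(az+b)/(cz−d)} · e^{−z} dz with α(z) = d₁ᵐPᵣ/(2ηPₛz + d₁ᵐPᵣ). -/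
open MeasureTheory Set

lemma integrableOn_aux (k : ℝ) (hk : 0 ≤ k) :
    IntegrableOn (fun x => Real.exp (-(x + k / x))) (Ioi (0:ℝ)) := by
  have h1 : IntegrableOn (fun x => Real.exp (-1 * x)) (Ioi (0:ℝ)) :=
    exp_neg_integrableOn_Ioi 0 one_pos
  apply Integrable.mono h1
  · refine (Measurable.aestronglyMeasurable ?_)
    exact (measurable_id.add (measurable_const.div measurable_id)).neg.exp
  · filter_upwards [ae_restrict_mem measurableSet_Ioi] with x hx
    simp only [Real.norm_eq_abs, Real.abs_exp]
    apply Real.exp_le_exp.2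
    have hx0 : 0 < x := hx
    have : 0 ≤ k / x := div_nonneg hk hx0.le
    nlinarith

lemma bessel_aux (s : ℝ) (hs : 0 < s) :
    ∫ x in Ioi (0:ℝ), Real.exp (-(x + s ^ 2 / x)) =
      (2 * s) * besselK1 (2 * s) := by
  set f : ℝ → ℝ := fun t => s * Real.exp t with hf
  have hderiv : ∀ t ∈ (univ : Set ℝ), HasDerivWithinAt f (s * Real.exp t) univ t := by
    intro t _
    exact ((Real.hasDerivAt_exp t).const_mul s).hasDerivWithinAt
  have hinj : InjOn f univ := by
    intro x _ y _ hxy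
    have := mul_left_cancel₀ (ne_of_gt hs) hxy
    exact Real.exp_injective this
  have himg : f '' univ = Ioi (0:ℝ) := by
    apply Subset.antisymm
    · rintro _ ⟨t, -, rfl⟩
      exact mul_pos hs (Real.exp_pos t)
    · intro y hy
      refine ⟨Real.log (y / s), mem_univ _, ?_⟩
      simp only [hf]
      rw [Real.exp_log (div_pos hy hs)]
      field_simp
  set g : ℝ → ℝ := fun x => Real.exp (-(x + s ^ 2 / x)) with hg
  have hsub := integral_image_eq_integral_abs_deriv_smul MeasurableSet.univ hderiv hinj g
  rw [himg, Measure.restrict_univ] at hsub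
  have hFeq : (fun t => |s * Real.exp t| • g (f t)) =
      fun t => s * Real.exp t * Real.exp (-(2 * s) * Real.cosh t) := by
    funext t
    have hpos : 0 < s * Real.exp t := mul_pos hs (Real.exp_pos t)
    have h1 : s ^ 2 / (s * Real.exp t) = s * Real.exp (-t) := by
      rw [Real.exp_neg]
      field_simp
    have h2 : -(s * Real.exp t + s ^ 2 / (s * Real.exp t)) = -(2 * s) * Real.cosh t := by
      rw [h1, Real.cosh_eq]; ring
    simp only [hg, hf, smul_eq_mul, abs_of_pos hpos, h2]
  rw [hFeq] at hsub
  set F : ℝ → ℝ := fun t => s * Real.exp t * Real.exp (-(2 * s) * Real.cosh t) with hF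
  -- integrability of F
  have hgi : IntegrableOn g (Ioi (0:ℝ)) := integrableOn_aux (s ^ 2) (sq_nonneg s)
  have hFi : Integrable F := by
    have := (integrableOn_image_iff_integrableOn_abs_deriv_smul MeasurableSet.univ
      hderiv hinj g).1 (by rwa [himg])
    rw [hFeq] at this
    rwa [integrableOn_univ] at this
  -- split integral over ℝ at 0
  have hsplit : (∫ t, F t) = (∫ t in Iic (0:ℝ), F t) + ∫ t in Ioi (0:ℝ), F t :=
    (intervalIntegral.integral_Iic_add_Ioi hFi.integrableOn hFi.integrableOn).symm
  have hneg : (∫ t in Iic (0:ℝ), F t) = ∫ t in Ioi (0:ℝ), F (-t) := by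
    rw [integral_comp_neg_Ioi (0:ℝ) F, neg_zero]
  have hFnegi : IntegrableOn (fun t => F (-t)) (Ioi (0:ℝ)) := by
    have : Integrable (fun t => F (-t)) := hFi.comp_neg
    exact this.integrableOn
  have hsum : (∫ t in Ioi (0:ℝ), F (-t)) + (∫ t in Ioi (0:ℝ), F t)
      = ∫ t in Ioi (0:ℝ), (2 * s) * (Real.exp (-(2 * s) * Real.cosh t) * Real.cosh t) := by
    rw [← integral_add hFnegi hFi.integrableOn]
    apply setIntegral_congr_fun measurableSet_Ioi
    intro t _
    simp only [hF, Real.cosh_neg, Real.cosh_eq]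
    ring
  have hbes : (∫ t in Ioi (0:ℝ), (2 * s) * (Real.exp (-(2 * s) * Real.cosh t) * Real.cosh t))
      = (2 * s) * besselK1 (2 * s) := by
    rw [integral_const_mul]; rfl
  calc ∫ x in Ioi (0:ℝ), Real.exp (-(x + s ^ 2 / x)) = ∫ t, F t := hsub
    _ = (∫ t in Ioi (0:ℝ), F (-t)) + ∫ t in Ioi (0:ℝ), F t := by rw [hsplit, hneg]
    _ = (2 * s) * besselK1 (2 * s) := by rw [hsum, hbes]

/-- Theorem 1: throughput of continuous time EH in AF relaying,
τ = (e^{−(a+d)/c}/2)·(u·K₁(u) − c·d₁ᵐPᵣ·ν). -/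
theorem throughput_continuous_AF
    (a b c d η Ps Pr d1m : ℝ)
    (ha : 0 < a) (hb : 0 < b) (hc : 0 < c) (hd : 0 < d)
    (hη : 0 < η) (hPs : 0 < Ps) (hPr : 0 < Pr) (hd1m : 0 < d1m)
    (u ν τ : ℝ)
    (hu : u = Real.sqrt (4 * (a * d + b * c) / c ^ 2))
    (hν : ν = ∫ x in Ioi (0:ℝ),
        Real.exp (-(x + (a * d + b * c) / (c ^ 2 * x))) /
          (2 * c * η * Ps * x + 2 * η * Ps * d + c * d1m * Pr))
    (hτ : τ = ∫ z in Ioi (d / c),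
        ((1 - d1m * Pr / (2 * η * Ps * z + d1m * Pr)) / 2) *
          Real.exp (-((a * z + b) / (c * z - d))) * Real.exp (-z)) :
    τ = (Real.exp (-((a + d) / c)) / 2) * (u * besselK1 u - c * d1m * Pr * ν) := by
  set K : ℝ := (a * d + b * c) / c ^ 2 with hK
  have hKpos : 0 < K := by positivity
  set E : ℝ := Real.exp (-((a + d) / c)) with hE
  set A : ℝ → ℝ := fun x => Real.exp (-(x + K / x)) with hA
  set D : ℝ → ℝ := fun x => 2 * c * η * Ps * x + 2 * η * Ps * d + c * d1m * Pr with hD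
  -- step 1: shift the integral
  have himg : (fun x : ℝ => x + d / c) '' Ioi 0 = Ioi (d / c) := by
    rw [image_add_const_Ioi, zero_add]
  have hderiv : ∀ x ∈ Ioi (0:ℝ),
      HasDerivWithinAt (fun x : ℝ => x + d / c) 1 (Ioi 0) x := by
    intro x _
    simpa using ((hasDerivAt_id x).add_const (d / c)).hasDerivWithinAt
  have hinj : InjOn (fun x : ℝ => x + d / c) (Ioi 0) := fun x _ y _ h => by
    simpa using h
  have hshift := integral_image_eq_integral_abs_deriv_smul measurableSet_Ioi hderiv hinj
    (fun z => ((1 - d1m * Pr / (2 * η * Ps * z + d1m * Pr)) / 2) *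
          Real.exp (-((a * z + b) / (c * z - d))) * Real.exp (-z))
  rw [himg] at hshift
  -- step 2: pointwise identity on Ioi 0
  have hpt : ∀ x ∈ Ioi (0:ℝ),
      |(1:ℝ)| • (((1 - d1m * Pr / (2 * η * Ps * (x + d / c) + d1m * Pr)) / 2) *
          Real.exp (-((a * (x + d / c) + b) / (c * (x + d / c) - d))) *
          Real.exp (-(x + d / c)))
        = E / 2 * (A x - c * d1m * Pr * (A x / D x)) := by
    intro x hx
    have hx0 : 0 < x := hx
    have hcz : c * (x + d / c) - d = c * x := by field_simp; ring
    have hQ : 0 < 2 * η * Ps * (x + d / c) + d1m * Pr := by positivity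
    have hDpos : 0 < D x := by simp only [hD]; positivity
    have hexp : Real.exp (-((a * (x + d / c) + b) / (c * x))) * Real.exp (-(x + d / c))
        = E * A x := by
      rw [← Real.exp_add, hE, hA, ← Real.exp_add]
      congr 1
      rw [hK]
      have hcx : c * x ≠ 0 := by positivity
      field_simp
      ring
    have hpre : 1 - d1m * Pr / (2 * η * Ps * (x + d / c) + d1m * Pr)
        = 1 - c * d1m * Pr / D x := by
      congr 1
      rw [hD]
      rw [div_eq_div_iff (ne_of_gt hQ) (ne_of_gt hDpos)]
      field_simp
      ring
    rw [abs_one, one_smul, hcz, hpre]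
    rw [mul_assoc, hexp]
    field_simp
  have hτ2 : τ = ∫ x in Ioi (0:ℝ), E / 2 * (A x - c * d1m * Pr * (A x / D x)) := by
    rw [hτ, hshift]
    exact setIntegral_congr_fun measurableSet_Ioi hpt
  -- integrability
  have hAi : IntegrableOn A (Ioi (0:ℝ)) := integrableOn_aux K hKpos.le
  have hBi : IntegrableOn (fun x => A x / D x) (Ioi (0:ℝ)) := by
    apply Integrable.mono (hAi.const_mul (c * d1m * Pr)⁻¹)
    · apply ContinuousOn.aestronglyMeasurable _ measurableSet_Ioi
      apply ContinuousOn.div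
      · apply Continuous.comp_continuousOn Real.continuous_exp
        apply ContinuousOn.neg
        exact continuousOn_id.add (continuousOn_const.div continuousOn_id
          (fun x hx => ne_of_gt hx))
      · exact Continuous.continuousOn (by continuity)
      · intro x hx
        have hx0 : 0 < x := hx
        simp only [hD]; positivity
    · filter_upwards [ae_restrict_mem measurableSet_Ioi] with x hx
      have hx0 : 0 < x := hx
      have hDpos : c * d1m * Pr ≤ D x := by
        simp only [hD]
        have h1 : 0 < 2 * c * η * Ps * x := by positivity
        have h2 : 0 < 2 * η * Ps * d := by positivity
        linarith
      have hApos : 0 < A x := Real.exp_pos _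
      have hDpos' : 0 < D x := lt_of_lt_of_le (by positivity) hDpos
      rw [Real.norm_eq_abs, Real.norm_eq_abs, abs_of_pos (div_pos hApos hDpos'),
        abs_of_pos (by positivity)]
      rw [div_le_iff₀ hDpos']
      rw [inv_mul_eq_div, div_mul_eq_mul_div, le_div_iff₀ (by positivity)]
      calc A x * (c * d1m * Pr) = c * d1m * Pr * A x := by ring
        _ ≤ D x * A x := mul_le_mul_of_nonneg_right hDpos hApos.le
        _ = A x * D x := by ring
  -- split
  have hνA : ν = ∫ x in Ioi (0:ℝ), A x / D x := by
    rw [hν]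
    apply setIntegral_congr_fun measurableSet_Ioi
    intro x hx
    simp only [hA, hD, hK, div_div]
  have hsplit : τ = E / 2 * ((∫ x in Ioi (0:ℝ), A x) - c * d1m * Pr * ν) := by
    rw [hτ2, integral_const_mul, integral_sub hAi (hBi.const_mul _), integral_const_mul, hνA]
  -- Bessel part
  have hu2 : u = 2 * Real.sqrt K := by
    rw [hu, hK]
    rw [show (4:ℝ) * (a * d + b * c) / c ^ 2 = 4 * ((a * d + b * c) / c ^ 2) by ring]
    rw [show (4:ℝ) = 2 ^ 2 by norm_num, Real.sqrt_mul (by positivity), Real.sqrt_sq (by norm_num)]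
  have hKs : Real.sqrt K ^ 2 = K := Real.sq_sqrt hKpos.le
  have hbes : (∫ x in Ioi (0:ℝ), A x) = u * besselK1 u := by
    have := bessel_aux (Real.sqrt K) (Real.sqrt_pos.2 hKpos)
    rw [hKs] at this
    rw [hA, this, hu2]
  rw [hsplit, hbes]
end
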